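/- Let k be a positive integer, ε₁,…,ε_k ≥ 0 real, δ₁,…,δ_k, δ_g ∈ [0,1), and ε_g ≥ 0. Suppose (1/∏_{i=1}^k (1+exp(ε_i))) · Σ_{S ⊆ {1,…,k}} max(exp(Σ_{i∈S} ε_i) − exp(ε_g)·exp(Σ_{i∉S} ε_i), 0) ≤ 1 − (1−δ_g)/∏_{i=1}^k (1−δ_i). Then for every family of finite types R₁,…,R_k and every family of pairs of probability mass functions P_i⁰, P_i¹ on R_i such that P_i⁰ and P_i¹ are (ε_i,δ_i)-indistinguishable for each i, the product distributions ⊗_{i=1}^k P_i⁰ and ⊗_{i=1}^k P_i¹ on R₁×…×R_k are (ε_g,δ_g)-indistinguishable. -/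

import Mathlib

open Finset

/-- A probability mass function on a finite type: nonnegative and summing to 1. -/
def IsPMF {R : Type*} [Fintype R] (P : R → ℝ) : Prop :=
  (∀ r, 0 ≤ P r) ∧ ∑ r, P r = 1

/-- Two distributions are `(ε, δ)`-indistinguishable if for every subset `S`,
`P₀(S) ≤ exp ε · P₁(S) + δ` and `P₁(S) ≤ exp ε · P₀(S) + δ`. -/
def Indist {R : Type*} [Fintype R] (ε δ : ℝ) (P0 P1 : R → ℝ) : Prop :=
  ∀ S : Finset R,
    (∑ r ∈ S, P0 r ≤ Real.exp ε * ∑ r ∈ S, P1 r + δ) ∧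
    (∑ r ∈ S, P1 r ≤ Real.exp ε * ∑ r ∈ S, P0 r + δ)

lemma max_sub_ite (x y : ℝ) : max (x - y) 0 = if y < x then x - y else 0 := by
  rcases le_or_gt x y with h | h
  · rw [if_neg (not_lt.2 h), max_eq_right (sub_nonpos.2 h)]
  · rw [if_pos h, max_eq_left (sub_nonneg.2 h.le)]

lemma min_eq_sub_max (x y : ℝ) : min x y = x - max (x - y) 0 := by
  rcases le_total x y with h | h
  · rw [min_eq_left h, max_eq_right (sub_nonpos.2 h), sub_zero]
  · rw [min_eq_right h, max_eq_left (sub_nonneg.2 h)]; ring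

lemma decomp_core {R : Type} [Fintype R] {e δ : ℝ} (he : 1 ≤ e) (hδ1 : δ < 1)
    {P Q : R → ℝ} (hP : IsPMF P) (hQ : IsPMF Q)
    (hβα : ∑ r, max (Q r - e * P r) 0 ≤ ∑ r, max (P r - e * Q r) 0)
    (hαδ : ∑ r, max (P r - e * Q r) 0 ≤ δ) :
    ∃ δ' P' Q', 0 ≤ δ' ∧ δ' ≤ δ ∧ IsPMF P' ∧ IsPMF Q' ∧
      (∀ r, P' r ≤ e * Q' r) ∧ (∀ r, Q' r ≤ e * P' r) ∧
      (∀ r, (1 - δ') * P' r ≤ P r) ∧ (∀ r, (1 - δ') * Q' r ≤ Q r) := by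
  have he0 : (0:ℝ) < e := lt_of_lt_of_le one_pos he
  set α := ∑ r, max (P r - e * Q r) 0 with hα_def
  set β := ∑ r, max (Q r - e * P r) 0 with hβ_def
  have hα0 : 0 ≤ α := Finset.sum_nonneg (fun r _ => le_max_right _ _)
  have hβ0 : 0 ≤ β := Finset.sum_nonneg (fun r _ => le_max_right _ _)
  have h1α : 0 < 1 - α := by linarith
  set x : R → ℝ := fun r => min (P r) (e * Q r) with hx_def
  set U : R → ℝ := fun r => min (Q r) (e * P r) with hU_def
  set L : R → ℝ := fun r => x r / e with hL_def
  have hx_sum : ∑ r, x r = 1 - α := by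
    have : ∀ r : R, x r = P r - max (P r - e * Q r) 0 := fun r => min_eq_sub_max _ _
    rw [Finset.sum_congr rfl (fun r _ => this r), Finset.sum_sub_distrib, hP.2]
  have hU_sum : ∑ r, U r = 1 - β := by
    have : ∀ r : R, U r = Q r - max (Q r - e * P r) 0 := fun r => min_eq_sub_max _ _
    rw [Finset.sum_congr rfl (fun r _ => this r), Finset.sum_sub_distrib, hQ.2]
  have hL_sum : ∑ r, L r = (1 - α) / e := by
    simp only [hL_def]; rw [← Finset.sum_div, hx_sum]
  have hx0 : ∀ r, 0 ≤ x r := fun r => le_min (hP.1 r) (mul_nonneg he0.le (hQ.1 r))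
  have hxP : ∀ r, x r ≤ P r := fun r => min_le_left _ _
  have hL0 : ∀ r, 0 ≤ L r := fun r => div_nonneg (hx0 r) he0.le
  have hLU : ∀ r, L r ≤ U r := by
    intro r
    apply le_min
    · rw [div_le_iff₀ he0]
      calc x r ≤ e * Q r := min_le_right _ _
      _ = Q r * e := mul_comm _ _
    · rw [div_le_iff₀ he0]
      calc x r ≤ P r := min_le_left _ _
      _ ≤ e * P r := le_mul_of_one_le_left (hP.1 r) he
      _ ≤ e * P r * e := le_mul_of_one_le_right (mul_nonneg he0.le (hP.1 r)) he
  have hUQ : ∀ r, U r ≤ Q r := fun r => min_le_left _ _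
  have hUex : ∀ r, U r ≤ e * x r := by
    intro r
    rcases le_total (P r) (e * Q r) with h | h
    · have : x r = P r := min_eq_left h
      rw [this]; exact min_le_right _ _
    · have : x r = e * Q r := min_eq_right h
      rw [this]
      calc U r ≤ Q r := min_le_left _ _
      _ ≤ e * Q r := le_mul_of_one_le_left (hQ.1 r) he
      _ ≤ e * (e * Q r) := le_mul_of_one_le_left (mul_nonneg he0.le (hQ.1 r)) he
  have hLsum_le : ∑ r, L r ≤ 1 - α := by
    rw [hL_sum]; exact div_le_self h1α.le he
  have hUsum_ge : 1 - α ≤ ∑ r, U r := by rw [hU_sum]; linarith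
  set d := ∑ r, (U r - L r) with hd_def
  have hd_sum : d = (∑ r, U r) - ∑ r, L r := Finset.sum_sub_distrib _ _
  have hd0 : 0 ≤ d := by rw [hd_sum]; linarith
  set t := (1 - α - ∑ r, L r) / d with ht_def
  have ht0 : 0 ≤ t := div_nonneg (by linarith) hd0
  have ht1 : t ≤ 1 := by
    rcases eq_or_lt_of_le hd0 with h | h
    · rw [ht_def, ← h, div_zero]; norm_num
    · rw [ht_def, div_le_one h, hd_sum]; linarith
  set y : R → ℝ := fun r => L r + t * (U r - L r) with hy_def
  have hy_sum : ∑ r, y r = 1 - α := by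
    simp only [hy_def]
    rw [Finset.sum_add_distrib, ← Finset.mul_sum, ← hd_def]
    rcases eq_or_lt_of_le hd0 with h | h
    · have : ∑ r, L r = 1 - α := by
        have := hd_sum; rw [← h] at this; linarith
      rw [← h, mul_zero, this, add_zero]
    · rw [ht_def, div_mul_cancel₀ _ (ne_of_gt h)]; ring
  have hLy : ∀ r, L r ≤ y r := by
    intro r; simp only [hy_def]
    nlinarith [hLU r]
  have hyU : ∀ r, y r ≤ U r := by
    intro r; simp only [hy_def]
    nlinarith [hLU r]
  have hy0 : ∀ r, 0 ≤ y r := fun r => le_trans (hL0 r) (hLy r)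
  have hxey : ∀ r, x r ≤ e * y r := by
    intro r
    have := hLy r
    rw [hL_def] at this
    rw [div_le_iff₀ he0] at this
    linarith [this]
  have hyex : ∀ r, y r ≤ e * x r := fun r => (hyU r).trans (hUex r)
  refine ⟨α, fun r => x r / (1 - α), fun r => y r / (1 - α), hα0, hαδ, ?_, ?_, ?_, ?_, ?_, ?_⟩
  · exact ⟨fun r => div_nonneg (hx0 r) h1α.le, by rw [← Finset.sum_div, hx_sum, div_self (ne_of_gt h1α)]⟩
  · exact ⟨fun r => div_nonneg (hy0 r) h1α.le, by rw [← Finset.sum_div, hy_sum, div_self (ne_of_gt h1α)]⟩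
  · intro r
    show x r / (1 - α) ≤ e * (y r / (1 - α))
    rw [← mul_div_assoc, div_le_div_iff_of_pos_right h1α]
    exact hxey r
  · intro r
    show y r / (1 - α) ≤ e * (x r / (1 - α))
    rw [← mul_div_assoc, div_le_div_iff_of_pos_right h1α]
    exact hyex r
  · intro r
    show (1 - α) * (x r / (1 - α)) ≤ P r
    rw [mul_comm, div_mul_cancel₀ _ (ne_of_gt h1α)]
    exact hxP r
  · intro r
    show (1 - α) * (y r / (1 - α)) ≤ Q r
    rw [mul_comm, div_mul_cancel₀ _ (ne_of_gt h1α)]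
    exact (hyU r).trans (hUQ r)


-- excess mass bound from indistinguishability
lemma excess_le {R : Type} [Fintype R] {ε δ : ℝ} {P Q : R → ℝ}
    (h : ∀ S : Finset R, ∑ r ∈ S, P r ≤ Real.exp ε * ∑ r ∈ S, Q r + δ) :
    ∑ r, max (P r - Real.exp ε * Q r) 0 ≤ δ := by
  classical
  set e := Real.exp ε
  set S := univ.filter (fun r => e * Q r < P r) with hS_def
  have h1 : ∑ r, max (P r - e * Q r) 0 = ∑ r ∈ S, (P r - e * Q r) := by
    rw [Finset.sum_filter]
    exact Finset.sum_congr rfl (fun r _ => max_sub_ite _ _)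
  rw [h1, Finset.sum_sub_distrib, ← Finset.mul_sum]
  linarith [h S]


lemma decomp {R : Type} [Fintype R] {ε δ : ℝ} (hε : 0 ≤ ε) (hδ1 : δ < 1)
    {P Q : R → ℝ} (hP : IsPMF P) (hQ : IsPMF Q) (h : Indist ε δ P Q) :
    ∃ δ' P' Q', 0 ≤ δ' ∧ δ' ≤ δ ∧ IsPMF P' ∧ IsPMF Q' ∧
      (∀ r, P' r ≤ Real.exp ε * Q' r) ∧ (∀ r, Q' r ≤ Real.exp ε * P' r) ∧
      (∀ r, (1 - δ') * P' r ≤ P r) ∧ (∀ r, (1 - δ') * Q' r ≤ Q r) := by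
  have he : 1 ≤ Real.exp ε := Real.one_le_exp hε
  have hα : ∑ r, max (P r - Real.exp ε * Q r) 0 ≤ δ := excess_le (fun S => (h S).1)
  have hβ : ∑ r, max (Q r - Real.exp ε * P r) 0 ≤ δ := excess_le (fun S => (h S).2)
  rcases le_total (∑ r, max (Q r - Real.exp ε * P r) 0)
    (∑ r, max (P r - Real.exp ε * Q r) 0) with hc | hc
  · exact decomp_core he hδ1 hP hQ hc hα
  · obtain ⟨d, Q2, P2, h0, h1, h2, h3, h4, h5, h6, h7⟩ := decomp_core he hδ1 hQ hP hc hβ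
    exact ⟨d, P2, Q2, h0, h1, h3, h2, h5, h4, h7, h6⟩

lemma pure_bound {k : ℕ} (ε : Fin k → ℝ) (hε : ∀ i, 0 ≤ ε i) (εg : ℝ)
    (R : Fin k → Type) [∀ i, Fintype (R i)]
    (P Q : ∀ i, R i → ℝ) (hP : ∀ i, IsPMF (P i)) (hQ : ∀ i, IsPMF (Q i))
    (h1 : ∀ i r, P i r ≤ Real.exp (ε i) * Q i r)
    (h2 : ∀ i r, Q i r ≤ Real.exp (ε i) * P i r)
    (S : Finset (∀ i, R i)) :
    ∑ r ∈ S, ∏ i, P i (r i) ≤ Real.exp εg * ∑ r ∈ S, ∏ i, Q i (r i) +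
      (1 / ∏ i, (1 + Real.exp (ε i))) *
        ∑ T : Finset (Fin k),
          max (Real.exp (∑ i ∈ T, ε i) - Real.exp εg * Real.exp (∑ i ∈ Tᶜ, ε i)) 0 := by
  classical
  set e : Fin k → ℝ := fun i => Real.exp (ε i) with he_def
  have he1 : ∀ i, 1 ≤ e i := fun i => Real.one_le_exp (hε i)
  have he0 : ∀ i, 0 < e i := fun i => Real.exp_pos _
  have hee : ∀ i, ε i ≠ 0 → 0 < e i ^ 2 - 1 := by
    intro i h0
    have : 1 < e i := Real.one_lt_exp_iff.2 (lt_of_le_of_ne (hε i) (Ne.symm h0))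
    nlinarith
  set a : ∀ i, R i → ℝ := fun i r =>
    if ε i = 0 then P i r / 2 else (e i * P i r - Q i r) / (e i ^ 2 - 1) with ha_def
  set b : ∀ i, R i → ℝ := fun i r =>
    if ε i = 0 then P i r / 2 else (e i * Q i r - P i r) / (e i ^ 2 - 1) with hb_def
  have hPQeq : ∀ i, ε i = 0 → ∀ r, P i r = Q i r := by
    intro i h0 r
    have ha := h1 i r; have hb := h2 i r
    rw [h0, Real.exp_zero, one_mul] at ha hb
    exact le_antisymm ha hb
  have ha0 : ∀ i r, 0 ≤ a i r := by
    intro i r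
    simp only [ha_def]
    split_ifs with h0
    · linarith [(hP i).1 r]
    · exact div_nonneg (by linarith [h2 i r]) (hee i h0).le
  have hb0 : ∀ i r, 0 ≤ b i r := by
    intro i r
    simp only [hb_def]
    split_ifs with h0
    · linarith [(hP i).1 r]
    · exact div_nonneg (by linarith [h1 i r]) (hee i h0).le
  have hab : ∀ i r, e i * a i r + b i r = P i r := by
    intro i r
    simp only [ha_def, hb_def]
    split_ifs with h0
    · have : e i = 1 := by rw [he_def]; simp [h0, Real.exp_zero]
      rw [this]; ring
    · have h := hee i h0
      field_simp
      ring
  have hba : ∀ i r, a i r + e i * b i r = Q i r := by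
    intro i r
    simp only [ha_def, hb_def]
    split_ifs with h0
    · have h1' : e i = 1 := by rw [he_def]; simp [h0, Real.exp_zero]
      rw [h1', hPQeq i h0 r]; ring
    · have h := hee i h0
      field_simp
      ring
  have hsa : ∀ i, ∑ x, a i x = 1 / (1 + e i) := by
    intro i
    by_cases h0 : ε i = 0
    · have h1' : e i = 1 := by rw [he_def]; simp [h0, Real.exp_zero]
      simp only [ha_def, if_pos h0]
      rw [← Finset.sum_div, (hP i).2, h1']
      norm_num
    · have h := hee i h0
      have hne : e i ^ 2 - 1 ≠ 0 := ne_of_gt h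
      have h1e : (0:ℝ) < 1 + e i := by linarith [he0 i]
      simp only [ha_def, if_neg h0]
      rw [← Finset.sum_div, Finset.sum_sub_distrib, ← Finset.mul_sum, (hP i).2, (hQ i).2]
      rw [div_eq_div_iff hne (ne_of_gt h1e)]
      ring
  have hsb : ∀ i, ∑ x, b i x = 1 / (1 + e i) := by
    intro i
    by_cases h0 : ε i = 0
    · have h1' : e i = 1 := by rw [he_def]; simp [h0, Real.exp_zero]
      simp only [hb_def, if_pos h0]
      rw [← Finset.sum_div, (hP i).2, h1']
      norm_num
    · have h := hee i h0
      have hne : e i ^ 2 - 1 ≠ 0 := ne_of_gt h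
      have h1e : (0:ℝ) < 1 + e i := by linarith [he0 i]
      simp only [hb_def, if_neg h0]
      rw [← Finset.sum_div, Finset.sum_sub_distrib, ← Finset.mul_sum, (hP i).2, (hQ i).2]
      rw [div_eq_div_iff hne (ne_of_gt h1e)]
      ring
  -- pointwise expansion
  have hkey : ∀ r : ∀ i, R i,
      ∏ i, P i (r i) - Real.exp εg * ∏ i, Q i (r i)
        = ∑ T : Finset (Fin k), (∏ i ∈ T, a i (r i)) * (∏ i ∈ Tᶜ, b i (r i)) *
            ((∏ i ∈ T, e i) - Real.exp εg * ∏ i ∈ Tᶜ, e i) := by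
    intro r
    have hPexp : ∏ i, P i (r i)
        = ∑ T : Finset (Fin k), (∏ i ∈ T, e i * a i (r i)) * ∏ i ∈ Tᶜ, b i (r i) := by
      rw [← Fintype.prod_add]
      exact Finset.prod_congr rfl (fun i _ => (hab i (r i)).symm)
    have hQexp : ∏ i, Q i (r i)
        = ∑ T : Finset (Fin k), (∏ i ∈ T, a i (r i)) * ∏ i ∈ Tᶜ, e i * b i (r i) := by
      rw [← Fintype.prod_add]
      exact Finset.prod_congr rfl (fun i _ => (hba i (r i)).symm)
    rw [hPexp, hQexp, Finset.mul_sum, ← Finset.sum_sub_distrib]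
    refine Finset.sum_congr rfl (fun T _ => ?_)
    rw [Finset.prod_mul_distrib, Finset.prod_mul_distrib]
    ring
  have hc0 : ∀ (T : Finset (Fin k)) (r : ∀ i, R i),
      0 ≤ (∏ i ∈ T, a i (r i)) * (∏ i ∈ Tᶜ, b i (r i)) :=
    fun T r => mul_nonneg (Finset.prod_nonneg fun i _ => ha0 i _)
      (Finset.prod_nonneg fun i _ => hb0 i _)
  have per_r : ∀ r : ∀ i, R i,
      ∏ i, P i (r i) - Real.exp εg * ∏ i, Q i (r i)
        ≤ ∑ T : Finset (Fin k), (∏ i ∈ T, a i (r i)) * (∏ i ∈ Tᶜ, b i (r i)) *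
            max ((∏ i ∈ T, e i) - Real.exp εg * ∏ i ∈ Tᶜ, e i) 0 := by
    intro r
    rw [hkey r]
    exact Finset.sum_le_sum fun T _ =>
      mul_le_mul_of_nonneg_left (le_max_left _ _) (hc0 T r)
  have nonneg_r : ∀ r : ∀ i, R i,
      0 ≤ ∑ T : Finset (Fin k), (∏ i ∈ T, a i (r i)) * (∏ i ∈ Tᶜ, b i (r i)) *
            max ((∏ i ∈ T, e i) - Real.exp εg * ∏ i ∈ Tᶜ, e i) 0 :=
    fun r => Finset.sum_nonneg fun T _ => mul_nonneg (hc0 T r) (le_max_right _ _)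
  have hsum_c : ∀ T : Finset (Fin k),
      ∑ r : ∀ i, R i, (∏ i ∈ T, a i (r i)) * (∏ i ∈ Tᶜ, b i (r i))
        = 1 / ∏ i, (1 + e i) := by
    intro T
    calc ∑ r : ∀ i, R i, (∏ i ∈ T, a i (r i)) * (∏ i ∈ Tᶜ, b i (r i))
        = ∑ r : ∀ i, R i, ∏ i, (if i ∈ T then a i (r i) else b i (r i)) := by
          refine Finset.sum_congr rfl fun r _ => ?_
          rw [← Finset.prod_mul_prod_compl T
            (fun i => if i ∈ T then a i (r i) else b i (r i))]
          congr 1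
          · exact (Finset.prod_congr rfl fun i hi => by rw [if_pos hi]).symm
          · exact (Finset.prod_congr rfl fun i hi =>
              by rw [if_neg (Finset.mem_compl.1 hi)]).symm
      _ = ∏ i, ∑ x, (if i ∈ T then a i x else b i x) := (Fintype.prod_sum (fun i x => if i ∈ T then a i x else b i x)).symm
      _ = ∏ i : Fin k, 1 / (1 + e i) := by
          refine Finset.prod_congr rfl fun i _ => ?_
          by_cases h : i ∈ T
          · simp only [if_pos h]; exact hsa i
          · simp only [if_neg h]; exact hsb i
      _ = 1 / ∏ i, (1 + e i) := by
          rw [Finset.prod_div_distrib, Finset.prod_const_one]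
  have final : ∑ r ∈ S, (∏ i, P i (r i) - Real.exp εg * ∏ i, Q i (r i))
      ≤ (1 / ∏ i, (1 + e i)) *
          ∑ T : Finset (Fin k),
            max (Real.exp (∑ i ∈ T, ε i) - Real.exp εg * Real.exp (∑ i ∈ Tᶜ, ε i)) 0 := by
    calc ∑ r ∈ S, (∏ i, P i (r i) - Real.exp εg * ∏ i, Q i (r i))
        ≤ ∑ r ∈ S, ∑ T : Finset (Fin k),
            (∏ i ∈ T, a i (r i)) * (∏ i ∈ Tᶜ, b i (r i)) *
              max ((∏ i ∈ T, e i) - Real.exp εg * ∏ i ∈ Tᶜ, e i) 0 :=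
          Finset.sum_le_sum fun r _ => per_r r
      _ ≤ ∑ r : ∀ i, R i, ∑ T : Finset (Fin k),
            (∏ i ∈ T, a i (r i)) * (∏ i ∈ Tᶜ, b i (r i)) *
              max ((∏ i ∈ T, e i) - Real.exp εg * ∏ i ∈ Tᶜ, e i) 0 :=
          Finset.sum_le_sum_of_subset_of_nonneg (Finset.subset_univ S)
            (fun r _ _ => nonneg_r r)
      _ = ∑ T : Finset (Fin k), ∑ r : ∀ i, R i,
            (∏ i ∈ T, a i (r i)) * (∏ i ∈ Tᶜ, b i (r i)) *
              max ((∏ i ∈ T, e i) - Real.exp εg * ∏ i ∈ Tᶜ, e i) 0 := Finset.sum_comm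
      _ = ∑ T : Finset (Fin k), (1 / ∏ i, (1 + e i)) *
              max ((∏ i ∈ T, e i) - Real.exp εg * ∏ i ∈ Tᶜ, e i) 0 := by
          refine Finset.sum_congr rfl fun T _ => ?_
          rw [← Finset.sum_mul, hsum_c T]
      _ = (1 / ∏ i, (1 + e i)) *
          ∑ T : Finset (Fin k),
            max (Real.exp (∑ i ∈ T, ε i) - Real.exp εg * Real.exp (∑ i ∈ Tᶜ, ε i)) 0 := by
          rw [← Finset.mul_sum]
          congr 1
          refine Finset.sum_congr rfl fun T _ => ?_
          rw [Real.exp_sum, Real.exp_sum]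
  rw [Finset.sum_sub_distrib, ← Finset.mul_sum] at final
  linarith


lemma sum_pi_one {k : ℕ} (R : Fin k → Type) [∀ i, Fintype (R i)]
    (P : ∀ i, R i → ℝ) (hP : ∀ i, IsPMF (P i)) :
    ∑ r : ∀ i, R i, ∏ i, P i (r i) = 1 := by
  classical
  rw [← Fintype.prod_sum P]
  exact Finset.prod_eq_one fun i _ => (hP i).2

lemma assemble {k : ℕ} (ε δ : Fin k → ℝ) (hε : ∀ i, 0 ≤ ε i) (hδ : ∀ i, 0 ≤ δ i ∧ δ i < 1)
    (εg δg : ℝ) (hδg : 0 ≤ δg ∧ δg < 1)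
    (hineq : (1 / ∏ i, (1 + Real.exp (ε i))) *
        ∑ T : Finset (Fin k),
          max (Real.exp (∑ i ∈ T, ε i) - Real.exp εg * Real.exp (∑ i ∈ Tᶜ, ε i)) 0
      ≤ 1 - (1 - δg) / ∏ i, (1 - δ i))
    (R : Fin k → Type) [∀ i, Fintype (R i)]
    (P Q P' Q' : ∀ i, R i → ℝ) (δ' : Fin k → ℝ)
    (hP : ∀ i, IsPMF (P i)) (hQ : ∀ i, IsPMF (Q i))
    (hP' : ∀ i, IsPMF (P' i)) (hQ' : ∀ i, IsPMF (Q' i))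
    (hd0 : ∀ i, 0 ≤ δ' i) (hdδ : ∀ i, δ' i ≤ δ i)
    (hb1 : ∀ i r, P' i r ≤ Real.exp (ε i) * Q' i r)
    (hb2 : ∀ i r, Q' i r ≤ Real.exp (ε i) * P' i r)
    (hPP' : ∀ i r, (1 - δ' i) * P' i r ≤ P i r)
    (hQQ' : ∀ i r, (1 - δ' i) * Q' i r ≤ Q i r)
    (S : Finset (∀ i, R i)) :
    ∑ r ∈ S, ∏ i, P i (r i) ≤ Real.exp εg * ∑ r ∈ S, ∏ i, Q i (r i) + δg := by
  classical
  set K := (1 / ∏ i, (1 + Real.exp (ε i))) *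
        ∑ T : Finset (Fin k),
          max (Real.exp (∑ i ∈ T, ε i) - Real.exp εg * Real.exp (∑ i ∈ Tᶜ, ε i)) 0 with hK_def
  set D := ∏ i, (1 - δ' i) with hD_def
  set D0 := ∏ i, (1 - δ i) with hD0_def
  have hD0pos : 0 < D0 := Finset.prod_pos fun i _ => by linarith [(hδ i).2]
  have hDD0 : D0 ≤ D :=
    Finset.prod_le_prod (fun i _ => by linarith [(hδ i).2]) (fun i _ => by linarith [hdδ i])
  have hDpos : 0 < D := lt_of_lt_of_le hD0pos hDD0
  have hDP : ∀ r : ∀ i, R i, D * ∏ i, P' i (r i) ≤ ∏ i, P i (r i) := by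
    intro r
    rw [hD_def, ← Finset.prod_mul_distrib]
    exact Finset.prod_le_prod
      (fun i _ => mul_nonneg (by linarith [hdδ i, (hδ i).2]) ((hP' i).1 _))
      (fun i _ => hPP' i _)
  have hDQ : ∀ r : ∀ i, R i, D * ∏ i, Q' i (r i) ≤ ∏ i, Q i (r i) := by
    intro r
    rw [hD_def, ← Finset.prod_mul_distrib]
    exact Finset.prod_le_prod
      (fun i _ => mul_nonneg (by linarith [hdδ i, (hδ i).2]) ((hQ' i).1 _))
      (fun i _ => hQQ' i _)
  have h1 : ∑ r ∈ S, ∏ i, P i (r i) ≤ D * ∑ r ∈ S, ∏ i, P' i (r i) + (1 - D) := by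
    have hsub : ∑ r ∈ S, (∏ i, P i (r i) - D * ∏ i, P' i (r i))
        ≤ ∑ r : ∀ i, R i, (∏ i, P i (r i) - D * ∏ i, P' i (r i)) :=
      Finset.sum_le_sum_of_subset_of_nonneg (Finset.subset_univ S)
        (fun r _ _ => sub_nonneg.2 (hDP r))
    rw [Finset.sum_sub_distrib, Finset.sum_sub_distrib, ← Finset.mul_sum, ← Finset.mul_sum,
      sum_pi_one R P hP, sum_pi_one R P' hP'] at hsub
    linarith
  have pure := pure_bound ε hε εg R P' Q' hP' hQ' hb1 hb2 S
  rw [← hK_def] at pure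
  have h2 : D * ∑ r ∈ S, ∏ i, Q' i (r i) ≤ ∑ r ∈ S, ∏ i, Q i (r i) := by
    rw [Finset.mul_sum]
    exact Finset.sum_le_sum fun r _ => hDQ r
  have hdiv : 1 - δg ≤ D * ((1 - δg) / D0) := by
    have heq : D * ((1 - δg) / D0) - (1 - δg) = (1 - δg) * (D - D0) / D0 := by
      field_simp
    have hnn : 0 ≤ (1 - δg) * (D - D0) / D0 :=
      div_nonneg (mul_nonneg (by linarith [hδg.2]) (by linarith)) hD0pos.le
    linarith
  have hK' : D * K + (1 - D) ≤ δg := by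
    have h2' : D * K ≤ D * (1 - (1 - δg) / D0) :=
      mul_le_mul_of_nonneg_left hineq hDpos.le
    have h3' : D * (1 - (1 - δg) / D0) = D - D * ((1 - δg) / D0) := by ring
    linarith
  have hexp : (0:ℝ) < Real.exp εg := Real.exp_pos _
  calc ∑ r ∈ S, ∏ i, P i (r i)
      ≤ D * ∑ r ∈ S, ∏ i, P' i (r i) + (1 - D) := h1
    _ ≤ D * (Real.exp εg * ∑ r ∈ S, ∏ i, Q' i (r i) + K) + (1 - D) := by
        have := mul_le_mul_of_nonneg_left pure hDpos.le
        linarith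
    _ = Real.exp εg * (D * ∑ r ∈ S, ∏ i, Q' i (r i)) + (D * K + (1 - D)) := by ring
    _ ≤ Real.exp εg * ∑ r ∈ S, ∏ i, Q i (r i) + δg :=
        add_le_add (mul_le_mul_of_nonneg_left h2 hexp.le) hK'

/-- Soundness direction of the optimal heterogeneous composition theorem
(Theorem 1.4 of Murtagh–Vadhan): if `(ε_g, δ_g)` satisfies the optimal composition
inequality, then the product of any `(ε_i, δ_i)`-indistinguishable pairs is
`(ε_g, δ_g)`-indistinguishable. -/
theorem optComp_sound (k : ℕ) (hk : 0 < k) (ε δ : Fin k → ℝ)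
    (hε : ∀ i, 0 ≤ ε i) (hδ : ∀ i, 0 ≤ δ i ∧ δ i < 1)
    (εg δg : ℝ) (hεg : 0 ≤ εg) (hδg : 0 ≤ δg ∧ δg < 1)
    (hineq : (1 / ∏ i, (1 + Real.exp (ε i))) *
        ∑ S : Finset (Fin k),
          max (Real.exp (∑ i ∈ S, ε i) - Real.exp εg * Real.exp (∑ i ∈ Sᶜ, ε i)) 0
      ≤ 1 - (1 - δg) / ∏ i, (1 - δ i))
    (R : Fin k → Type) [∀ i, Fintype (R i)]
    (P0 P1 : ∀ i, R i → ℝ)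
    (hP0 : ∀ i, IsPMF (P0 i)) (hP1 : ∀ i, IsPMF (P1 i))
    (hind : ∀ i, Indist (ε i) (δ i) (P0 i) (P1 i)) :
    Indist εg δg (fun r : ∀ i, R i => ∏ i, P0 i (r i))
                 (fun r : ∀ i, R i => ∏ i, P1 i (r i)) := by
  classical
  choose δ' P' Q' h0 h1 h2 h3 h4 h5 h6 h7 using fun i =>
    decomp (hε i) (hδ i).2 (hP0 i) (hP1 i) (hind i)
  intro S
  constructor
  · exact assemble ε δ hε hδ εg δg hδg hineq R P0 P1 P' Q' δ'
      hP0 hP1 h2 h3 h0 h1 h4 h5 h6 h7 S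
  · exact assemble ε δ hε hδ εg δg hδg hineq R P1 P0 Q' P' δ'
      hP1 hP0 h3 h2 h0 h1 h5 h4 h7 h6 S
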